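/- Let G be a finite simple graph in which every vertex has a strict preference list, and let v be a vertex of G with at least one neighbor such that every neighbor u of v ranks v first, i.e., ℓ_u(v) = 1 for all u ∈ N(v). Then every popular matching in G matches v. -/

import Mathlib

open SimpleGraph

universe u

/-- A matching: a set of edges of `G` that are pairwise vertex-disjoint. -/
def IsMatching {W : Type u} (G : SimpleGraph W) (M : Set (Sym2 W)) : Prop :=
  M ⊆ G.edgeSet ∧ ∀ e ∈ M, ∀ e' ∈ M, e ≠ e' → ∀ v : W, v ∈ e → v ∉ e'

/-- `v` is matched by `M`. -/
def Matched {W : Type u} (M : Set (Sym2 W)) (v : W) : Prop := ∃ w : W, s(v, w) ∈ M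

open scoped Classical in
/-- `rank G pref M v = pref v (M(v))`, with the convention `|N(v)|+1` if `v` is unmatched. -/
noncomputable def rank {W : Type u} (G : SimpleGraph W) (pref : W → W → ℕ)
    (M : Set (Sym2 W)) (v : W) : ℕ :=
  if h : ∃ w : W, s(v, w) ∈ M then pref v h.choose else (G.neighborSet v).ncard + 1

/-- The number of vertices preferring `M` over `M'`. -/
noncomputable def vote {W : Type u} (G : SimpleGraph W) (pref : W → W → ℕ)
    (M M' : Set (Sym2 W)) : ℕ :=
  {v : W | rank G pref M v < rank G pref M' v}.ncard

/-- A popular matching: no other matching is more popular. -/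
def IsPopular {W : Type u} (G : SimpleGraph W) (pref : W → W → ℕ) (M : Set (Sym2 W)) : Prop :=
  IsMatching G M ∧
    ∀ M' : Set (Sym2 W), IsMatching G M' → vote G pref M' M ≤ vote G pref M M'

/-- Each vertex has a strict preference list: `pref v` is a bijection from the
neighborhood of `v` onto `{1, …, |N(v)|}`. -/
def HasPref {W : Type u} (G : SimpleGraph W) (pref : W → W → ℕ) : Prop :=
  ∀ v : W, Set.BijOn (pref v) (G.neighborSet v) (Set.Icc 1 (G.neighborSet v).ncard)

/-- The edge `e ∉ M` is labeled `+2` by `label_M` (given rank function `rk`):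
both endpoints prefer each other over their status in `M`. -/
def EdgePlus {W : Type u} (pref : W → W → ℕ) (rk : W → ℕ) (e : Sym2 W) : Prop :=
  ∃ x y : W, e = s(x, y) ∧ pref x y < rk x ∧ pref y x < rk y

/-- The edge `e ∉ M` is labeled `-2` by `label_M` (given rank function `rk`):
both endpoints prefer their status in `M` over each other. -/
def EdgeMinus {W : Type u} (pref : W → W → ℕ) (rk : W → ℕ) (e : Sym2 W) : Prop :=
  ∃ x y : W, e = s(x, y) ∧ rk x < pref x y ∧ rk y < pref y x

/-- The graph `G_M`: the spanning subgraph of `G` consisting of the edges of `M`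
together with the edges not labeled `-2`. -/
def GMgraph {W : Type u} (G : SimpleGraph W) (pref : W → W → ℕ) (M : Set (Sym2 W)) :
    SimpleGraph W where
  Adj x y := G.Adj x y ∧ (s(x, y) ∈ M ∨ ¬ EdgeMinus pref (rank G pref M) s(x, y))
  symm := by
    constructor
    intro x y h
    refine ⟨h.1.symm, ?_⟩
    rw [Sym2.eq_swap]
    exact h.2
  loopless := ⟨fun x h => G.irrefl h.1⟩

/-- Consecutive edges alternate between `M` and non-`M`. -/
def altRel {W : Type u} (M : Set (Sym2 W)) (e e' : Sym2 W) : Prop := e ∈ M ↔ e' ∉ M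

/-- An alternating path (with respect to `M`) in a graph `G'`. -/
def IsAltPath {W : Type u} (M : Set (Sym2 W)) {G' : SimpleGraph W} {x y : W}
    (p : G'.Walk x y) : Prop :=
  p.IsPath ∧ List.Chain' (altRel M) p.edges ∧
    (∀ e, p.edges.head? = some e → e ∉ M → ¬ Matched M x) ∧
    (∀ e, p.edges.getLast? = some e → e ∉ M → ¬ Matched M y)

/-- An alternating cycle (with respect to `M`) in a graph `G'`:
the edges alternate cyclically between `M` and non-`M`. -/
def IsAltCycle {W : Type u} (M : Set (Sym2 W)) {G' : SimpleGraph W} {x : W}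
    (p : G'.Walk x x) : Prop :=
  p.IsCycle ∧ List.Chain' (altRel M) (p.edges ++ p.edges.take 1)

/-- `l` contains at least one edge labeled `+2`. -/
def OnePlusEdge {W : Type u} (pref : W → W → ℕ) (rk : W → ℕ) (l : List (Sym2 W)) : Prop :=
  ∃ e ∈ l, EdgePlus pref rk e

/-- `l` contains at least two edges labeled `+2`. -/
def TwoPlusEdges {W : Type u} (pref : W → W → ℕ) (rk : W → ℕ) (l : List (Sym2 W)) : Prop :=
  ∃ e ∈ l, ∃ e' ∈ l, e ≠ e' ∧ EdgePlus pref rk e ∧ EdgePlus pref rk e'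

/-- A vertex cover. -/
def IsVC {V : Type u} (G : SimpleGraph V) (U : Set V) : Prop :=
  ∀ ⦃x y : V⦄, G.Adj x y → x ∈ U ∨ y ∈ U

lemma matched_of_mem {W : Type u} {M : Set (Sym2 W)} {e : Sym2 W} {x : W}
    (he : e ∈ M) (hx : x ∈ e) : Matched M x := by
  obtain ⟨b, rfl⟩ := Sym2.mem_iff_exists.mp hx
  exact ⟨b, he⟩

lemma partner_unique {W : Type u} {G : SimpleGraph W} {M : Set (Sym2 W)}
    (hM : IsMatching G M) {x y z : W} (hy : s(x, y) ∈ M) (hz : s(x, z) ∈ M) : y = z := by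
  by_cases h : s(x, y) = s(x, z)
  · exact Sym2.congr_right.mp h
  · exact absurd (Sym2.mem_mk_left x z) (hM.2 _ hy _ hz h x (Sym2.mem_mk_left x y))

lemma rank_matched {W : Type u} {G : SimpleGraph W} {pref : W → W → ℕ} {M : Set (Sym2 W)}
    (hM : IsMatching G M) {x w : W} (h : s(x, w) ∈ M) :
    rank G pref M x = pref x w := by
  have hex : ∃ w, s(x, w) ∈ M := ⟨w, h⟩
  rw [rank, dif_pos hex]
  exact congrArg (pref x) (partner_unique hM hex.choose_spec h)

lemma rank_unmatched {W : Type u} {G : SimpleGraph W} {pref : W → W → ℕ} {M : Set (Sym2 W)}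
    {x : W} (h : ¬ Matched M x) : rank G pref M x = (G.neighborSet x).ncard + 1 :=
  dif_neg h

/-- If a vertex `v` has at least one neighbor and every neighbor of `v` ranks `v`
first, then every popular matching matches `v`. -/
theorem popular_matches_universally_top {W : Type u} [Finite W] (G : SimpleGraph W)
    (pref : W → W → ℕ) (hpref : HasPref G pref) (v : W)
    (hne : (G.neighborSet v).Nonempty)
    (hfirst : ∀ u ∈ G.neighborSet v, pref u v = 1)
    (M : Set (Sym2 W)) (hM : IsPopular G pref M) :
    Matched M v := by
  by_contra hv
  obtain ⟨u, hu⟩ := hne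
  have hadj : G.Adj v u := hu
  have hvu : v ≠ u := hadj.ne
  have huNv : v ∈ G.neighborSet u := hadj.symm
  set M' : Set (Sym2 W) := {e ∈ M | u ∉ e} ∪ {s(v, u)} with hM'def
  have hvuM' : s(v, u) ∈ M' := Or.inr rfl
  have huvM' : s(u, v) ∈ M' := by rw [Sym2.eq_swap]; exact hvuM'
  -- M' is a matching
  have hmatch : IsMatching G M' := by
    constructor
    · intro e he
      rcases he with ⟨heM, -⟩ | he
      · exact hM.1.1 heM
      · simp only [Set.mem_singleton_iff] at he
        subst he
        exact hadj
    · intro e he e' he' hne' x hx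
      rcases he with ⟨heM, heu⟩ | he <;> rcases he' with ⟨heM', heu'⟩ | he'
      · exact hM.1.2 e heM e' heM' hne' x hx
      · simp only [Set.mem_singleton_iff] at he'
        subst he'
        intro hx'
        rcases Sym2.mem_iff.mp hx' with rfl | rfl
        · exact hv (matched_of_mem heM hx)
        · exact heu hx
      · simp only [Set.mem_singleton_iff] at he
        subst he
        rcases Sym2.mem_iff.mp hx with rfl | rfl
        · intro hx'
          exact hv (matched_of_mem heM' hx')
        · exact heu'
      · simp only [Set.mem_singleton_iff] at he he'
        exact absurd (he.trans he'.symm) hne'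
  -- v prefers M'
  have hrv' : rank G pref M' v = pref v u := rank_matched hmatch hvuM'
  have hrv : rank G pref M v = (G.neighborSet v).ncard + 1 := rank_unmatched hv
  have hvlt : rank G pref M' v < rank G pref M v := by
    rw [hrv', hrv]
    have := ((hpref v).mapsTo hu).2
    omega
  -- u prefers M'
  have hru' : rank G pref M' u = 1 := by
    rw [rank_matched hmatch huvM', hfirst u hu]
  have hult : rank G pref M' u < rank G pref M u := by
    rw [hru']
    by_cases hmu : Matched M u
    · obtain ⟨w, hw⟩ := hmu
      rw [rank_matched hM.1 hw]
      have hwN : w ∈ G.neighborSet u := hM.1.1 hw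
      have h1 : 1 ≤ pref u w := ((hpref u).mapsTo hwN).1
      have hwv : w ≠ v := by
        rintro rfl
        exact hv (matched_of_mem hw (Sym2.mem_mk_right _ _))
      have : pref u w ≠ 1 := by
        intro h
        exact hwv ((hpref u).injOn hwN huNv (h.trans (hfirst u hu).symm))
      omega
    · rw [rank_unmatched hmu]
      have : 0 < (G.neighborSet u).ncard :=
        (Set.ncard_pos (G.neighborSet u).toFinite).mpr ⟨v, huNv⟩
      omega
  -- vote(M', M) ≥ 2
  have hv2 : 2 ≤ vote G pref M' M := by
    have hsub : ({v, u} : Set W) ⊆ {x | rank G pref M' x < rank G pref M x} := by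
      rintro x (rfl | rfl)
      · exact hvlt
      · exact hult
    calc 2 = ({v, u} : Set W).ncard := (Set.ncard_pair hvu).symm
      _ ≤ _ := Set.ncard_le_ncard hsub (Set.toFinite _)
  -- vote(M, M') ≤ 1
  have hv1 : vote G pref M M' ≤ 1 := by
    have hsub : {x | rank G pref M x < rank G pref M' x} ⊆ {x | s(u, x) ∈ M} := by
      intro x hx
      simp only [Set.mem_setOf_eq] at hx ⊢
      by_contra hxu
      have hxv : x ≠ v := by rintro rfl; exact absurd hvlt (Nat.lt_asymm hx)
      have hxu' : x ≠ u := by rintro rfl; exact absurd hult (Nat.lt_asymm hx)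
      have heq : rank G pref M x = rank G pref M' x := by
        by_cases hmx : Matched M x
        · obtain ⟨y, hy⟩ := hmx
          have hyu : y ≠ u := by
            rintro rfl
            exact hxu (by rwa [Sym2.eq_swap] at hy)
          have hyM' : s(x, y) ∈ M' := by
            left
            refine ⟨hy, ?_⟩
            rw [Sym2.mem_iff]
            rintro (rfl | rfl)
            · exact hxu' rfl
            · exact hyu rfl
          rw [rank_matched hM.1 hy, rank_matched hmatch hyM']
        · have hmx' : ¬ Matched M' x := by
            rintro ⟨y, hy⟩
            rcases hy with ⟨hyM, -⟩ | hy
            · exact hmx ⟨y, hyM⟩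
            · simp only [Set.mem_singleton_iff, Sym2.eq, Sym2.rel_iff', Prod.mk.injEq,
                Prod.swap_prod_mk] at hy
              rcases hy with ⟨rfl, rfl⟩ | ⟨rfl, rfl⟩
              · exact hxv rfl
              · exact hxu' rfl
          rw [rank_unmatched hmx, rank_unmatched hmx']
      exact absurd heq (Nat.ne_of_lt hx)
    have hss : {x : W | s(u, x) ∈ M}.Subsingleton := by
      intro a ha b hb
      exact partner_unique hM.1 ha hb
    calc vote G pref M M' ≤ ({x : W | s(u, x) ∈ M}).ncard :=
          Set.ncard_le_ncard hsub (Set.toFinite _)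
      _ ≤ 1 := (Set.ncard_le_one (Set.toFinite _)).mpr fun a ha b hb => hss ha hb
  have := hM.2 M' hmatch
  omega
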